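/- For n, m, ℓ ∈ ℕ: ∏_{j=0}^{m} binom(n+j, ℓ) / binom(ℓ+j, ℓ) = ∏_{j=0}^{m} binom(n+m, ℓ+j) / binom(n+m, j), as an identity of rational numbers (assuming ℓ ≤ n so that all binomials are positive). -/

import Mathlib

/-- ∏_{j=0}^m binom(n+j,ℓ)/binom(ℓ+j,ℓ) = ∏_{j=0}^m binom(n+m,ℓ+j)/binom(n+m,j). -/
theorem binomial_product_ratio_identity (n m ℓ : ℕ) (h : ℓ ≤ n) :
    ∏ j ∈ Finset.range (m + 1),
        (((n + j).choose ℓ : ℕ) : ℚ) / (((ℓ + j).choose ℓ : ℕ) : ℚ)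
      = ∏ j ∈ Finset.range (m + 1),
        (((n + m).choose (ℓ + j) : ℕ) : ℚ) / (((n + m).choose j : ℕ) : ℚ) := by
  have hfac : ∀ k : ℕ, ((k.factorial : ℕ) : ℚ) ≠ 0 := fun k =>
    Nat.cast_ne_zero.2 k.factorial_ne_zero
  calc ∏ j ∈ Finset.range (m + 1),
        (((n + j).choose ℓ : ℕ) : ℚ) / (((ℓ + j).choose ℓ : ℕ) : ℚ)
      = (∏ j ∈ Finset.range (m + 1),
          (((n + j).factorial : ℚ) / ((n + j - ℓ).factorial : ℚ))) *
        ∏ j ∈ Finset.range (m + 1),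
          ((j.factorial : ℚ) / ((ℓ + j).factorial : ℚ)) := by
        rw [← Finset.prod_mul_distrib]
        apply Finset.prod_congr rfl
        intro j _
        rw [Nat.cast_choose ℚ (le_trans h (Nat.le_add_right n j)),
            Nat.cast_choose ℚ (Nat.le_add_right ℓ j)]
        have hj : ℓ + j - ℓ = j := by omega
        rw [hj]
        field_simp
    _ = (∏ j ∈ Finset.range (m + 1),
          (((n + j).factorial : ℚ) / ((n + j - ℓ).factorial : ℚ))) *
        ∏ j ∈ Finset.range (m + 1),
          (((m - j).factorial : ℚ) / ((ℓ + (m - j)).factorial : ℚ)) := by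
        congr 1
        rw [← Finset.prod_range_reflect
          (fun j => ((j.factorial : ℚ) / ((ℓ + j).factorial : ℚ))) (m + 1)]
        apply Finset.prod_congr rfl
        intro j hj
        simp only [Finset.mem_range] at hj
        have : m + 1 - 1 - j = m - j := by omega
        rw [this]
    _ = ∏ j ∈ Finset.range (m + 1),
        (((n + m).choose (ℓ + (m - j)) : ℕ) : ℚ) / (((n + m).choose (m - j) : ℕ) : ℚ) := by
        rw [← Finset.prod_mul_distrib]
        apply Finset.prod_congr rfl
        intro j hj
        simp only [Finset.mem_range] at hj
        have hj' : j ≤ m := by omega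
        have h1 : ℓ + (m - j) ≤ n + m := by omega
        have h2 : m - j ≤ n + m := by omega
        rw [Nat.cast_choose ℚ h1, Nat.cast_choose ℚ h2]
        have e1 : n + m - (ℓ + (m - j)) = n + j - ℓ := by omega
        have e2 : n + m - (m - j) = n + j := by omega
        rw [e1, e2]
        field_simp
    _ = ∏ j ∈ Finset.range (m + 1),
        (((n + m).choose (ℓ + j) : ℕ) : ℚ) / (((n + m).choose j : ℕ) : ℚ) := by
        rw [← Finset.prod_range_reflect
          (fun j => (((n + m).choose (ℓ + j) : ℕ) : ℚ) / (((n + m).choose j : ℕ) : ℚ)) (m + 1)]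
        apply Finset.prod_congr rfl
        intro j hj
        simp only [Finset.mem_range] at hj
        have : m + 1 - 1 - j = m - j := by omega
        rw [this]
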